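/- arXiv:1704.03661 — 3 statements merged into one kernel-verified Lean document; each statement's English description precedes it below -/
import Mathlib

section
/- If β ∈ M_N(o_r) is regular (its reduction mod p is a regular matrix over F_q), then the centralizer of β in GL_N(o_r) equals the unit group of the subring o_r[β] generated by β; in particular this centralizer is abelian. -/
open IsLocalRing

/-- Reduction mod the maximal ideal, `𝔬/𝔭^r → 𝔬/𝔭`. -/
noncomputable def resRed (o : Type) [CommRing o] [IsLocalRing o] (r : ℕ) (hr : r ≠ 0) :
    (o ⧸ (maximalIdeal o) ^ r) →+* ResidueField o :=
  Ideal.Quotient.lift _ (IsLocalRing.residue o) fun a ha =>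
    Ideal.Quotient.eq_zero_iff_mem.mpr (Ideal.pow_le_self hr ha)

section Aux
open Polynomial Matrix

set_option maxHeartbeats 1600000 in
set_option synthInstance.maxHeartbeats 1000000 in
theorem exists_cyclic_vector {k : Type} [Field k] {N : ℕ} (B : Matrix (Fin N) (Fin N) k)
    (hreg : Module.finrank k
      ↥(Subalgebra.centralizer k ({B} : Set (Matrix (Fin N) (Fin N) k))) ≤ N) :
    ∃ v : Fin N → k, LinearIndependent k (fun i : Fin N => B ^ (i : ℕ) *ᵥ v) := by
  classical
  set V : Type := Fin N → k with hV
  set φ : V →ₗ[k] V := Matrix.toLinAlgEquiv' B with hφ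
  set M : Type := Module.AEval k V φ with hM
  have htor : Module.IsTorsion k[X] M := by
    intro m
    refine ⟨⟨B.charpoly, mem_nonZeroDivisors_of_ne_zero B.charpoly_monic.ne_zero⟩, ?_⟩
    show B.charpoly • m = 0
    apply (Module.AEval.of k V φ).symm.injective
    rw [Module.AEval.of_symm_smul]
    have h0 : aeval φ B.charpoly = 0 := by
      rw [hφ, aeval_algHom_apply (Matrix.toLinAlgEquiv' (R := k) (n := Fin N)) B,
        Matrix.aeval_self_charpoly]
      simp
    rw [h0]
    simp
  obtain ⟨ι, fι, p, hp, e, ⟨eDS⟩⟩ := Module.equiv_directSum_of_isTorsion htor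
  set q : ι → k[X] := fun l => p l ^ e l with hq
  have hqne : ∀ l, q l ≠ 0 := fun l => pow_ne_zero _ (hp l).ne_zero
  set Cq : ι → Type := fun l => k[X] ⧸ (Submodule.span k[X] {q l}) with hCq
  -- eDS : M ≃ₗ[k[X]] ⨁ l, Cq l
  have eDS' : M ≃ₗ[k[X]] DirectSum ι fun l => Cq l := eDS
  clear eDS
  -- the k-linear equivalence with V
  let eV : V ≃ₗ[k] (∀ l, Cq l) :=
    ((Module.AEval.of k V φ).trans (eDS'.restrictScalars k)).trans
      ((DirectSum.linearEquivFunOnFintype k[X] ι Cq).restrictScalars k)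
  have hfinV : Module.finrank k V = N := by
    show Module.finrank k (Fin N → k) = N
    simp [Module.finrank_pi]
  have hfd : FiniteDimensional k (∀ l, Cq l) := by
    have : FiniteDimensional k V := inferInstanceAs (FiniteDimensional k (Fin N → k))
    exact Module.Finite.equiv eV
  have hNdim : Module.finrank k (∀ l, Cq l) = N := by
    rw [← eV.finrank_eq, hfinV]
  have hfdl : ∀ l, FiniteDimensional k (Cq l) := fun l =>
    PowerBasis.finite (AdjoinRoot.powerBasis (hqne l))
  have hdeg : ∀ l, Module.finrank k (Cq l) = (q l).natDegree := by
    intro l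
    have := (AdjoinRoot.powerBasis (hqne l)).finrank
    simp [AdjoinRoot.powerBasis] at this
    exact this
  have hsum : ∑ l, (q l).natDegree = N := by
    rw [← hNdim, Module.finrank_pi_fintype]
    exact Finset.sum_congr rfl fun l _ => (hdeg l).symm
  by_cases hcop : Pairwise fun l l' => IsCoprime (q l) (q l')
  · -- coprime case: a cyclic vector exists
    set x0 : DirectSum ι (fun l => Cq l) :=
      ∑ l, DirectSum.lof k[X] ι Cq l (Submodule.Quotient.mk 1) with hx0
    set vM : M := eDS'.symm x0 with hvM
    have hkey : ∀ f : k[X], f • vM = 0 → ∀ l, q l ∣ f := by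
      intro f hf l
      have h1 : f • x0 = 0 := by
        have h := congrArg (⇑eDS') hf
        rw [_root_.map_smul, _root_.map_zero, hvM, LinearEquiv.apply_symm_apply] at h
        exact h
      have h3 : DirectSum.component k[X] ι Cq l x0 = Submodule.Quotient.mk 1 := by
        rw [hx0, _root_.map_sum, Finset.sum_eq_single l]
        · rw [DirectSum.component.lof_self]
        · intro l' _ hl'
          rw [DirectSum.component.of, dif_neg (fun hh => hl' hh)]
        · intro habs
          exact absurd (Finset.mem_univ l) habs
      have h2 := congrArg (DirectSum.component k[X] ι Cq l) h1
      rw [_root_.map_zero, _root_.map_smul, h3] at h2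
      have h4 : (Submodule.Quotient.mk f : Cq l) = 0 := by
        rw [← h2, ← Submodule.Quotient.mk_smul]
        congr 1
        rw [smul_eq_mul, mul_one]
      obtain ⟨a, ha⟩ := Submodule.mem_span_singleton.mp ((Submodule.Quotient.mk_eq_zero _).mp h4)
      exact Dvd.intro_left a (by rw [← smul_eq_mul]; exact ha)
    have hprod : ∀ f : k[X], f • vM = 0 → (∏ l, q l) ∣ f := by
      intro f hf
      refine Finset.prod_dvd_of_coprime ?_ fun l _ => hkey f hf l
      intro a _ b _ hab
      exact hcop hab
    have hdegprod : (∏ l, q l).natDegree = N := by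
      rw [Polynomial.natDegree_prod _ _ fun l _ => hqne l]
      exact hsum
    set v0 : V := (Module.AEval.of k V φ).symm vM with hv0
    refine ⟨v0, ?_⟩
    rw [Fintype.linearIndependent_iff]
    intro g hg
    set f : k[X] := ∑ i0 : Fin N, C (g i0) * X ^ (i0 : ℕ) with hf
    have hev : ∀ (w : V), (aeval φ f) w = ∑ i0 : Fin N, g i0 • (B ^ (i0 : ℕ) *ᵥ w) := by
      intro w
      rw [hf, map_sum (aeval φ), LinearMap.sum_apply]
      refine Finset.sum_congr rfl fun i0 _ => ?_
      rw [_root_.map_mul, aeval_C, aeval_X_pow]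
      show ((algebraMap k (V →ₗ[k] V)) (g i0) * φ ^ (i0 : ℕ)) w = _
      rw [Module.End.mul_apply, Module.algebraMap_end_apply]
      congr 1
      have hpow : φ ^ (i0 : ℕ) = Matrix.toLinAlgEquiv' (B ^ (i0 : ℕ)) := by
        rw [hφ, map_pow]
      rw [hpow, Matrix.toLinAlgEquiv'_apply]
    have hfvM : f • vM = 0 := by
      apply (Module.AEval.of k V φ).symm.injective
      rw [Module.AEval.of_symm_smul, _root_.map_zero]
      have hsv : (Module.AEval.of k V φ).symm vM = v0 := rfl
      rw [hsv]
      show (aeval φ f) v0 = (0 : V)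
      rw [hev v0]
      exact hg
    have hdvdf := hprod f hfvM
    have hf0 : f = 0 := by
      by_contra hne
      have hle := Polynomial.natDegree_le_of_dvd hdvdf hne
      rw [hdegprod] at hle
      have hNpos : N ≠ 0 := by
        rintro rfl
        refine hne ?_
        rw [hf]
        simp
      have hdf : f.natDegree ≤ N - 1 := by
        rw [hf]
        refine Polynomial.natDegree_sum_le_of_forall_le _ _ fun i0 _ => ?_
        refine le_trans (Polynomial.natDegree_C_mul_X_pow_le _ _) ?_
        have := i0.isLt
        omega
      omega
    intro i0
    have hco : f.coeff (i0 : ℕ) = 0 := by rw [hf0]; simp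
    rw [hf, Polynomial.finset_sum_coeff] at hco
    simp only [Polynomial.coeff_C_mul, Polynomial.coeff_X_pow, mul_ite, mul_one, mul_zero] at hco
    rw [Finset.sum_eq_single i0] at hco
    · rw [if_pos rfl] at hco
      exact hco
    · intro l _ hl
      rw [if_neg (fun hh => hl (Fin.ext hh.symm))]
    · intro habs
      exact absurd (Finset.mem_univ i0) habs
  · -- non-coprime case: contradiction with the centralizer dimension
    exfalso
    rw [Pairwise] at hcop
    push_neg at hcop
    obtain ⟨i, j, hij, hncop⟩ := hcop
    have hei : e i ≠ 0 := by
      intro h0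
      exact hncop (by rw [hq]; simp only [h0, pow_zero]; exact isCoprime_one_left)
    have hej : e j ≠ 0 := by
      intro h0
      exact hncop (by rw [hq]; simp only [h0, pow_zero]; exact isCoprime_one_right)
    have hdvd : p j ∣ p i := by
      by_contra hd
      exact hncop ((((hp j).coprime_iff_not_dvd).mpr hd).symm.pow)
    have hqi : q i = p i ^ e i := rfl
    have hqj : q j = p j ^ e j := rfl
    -- the extra homomorphism
    set c : k[X] := p j ^ (e j - 1) with hc
    have h1 : q j = c * p j := by
      rw [hqj, hc, ← pow_succ, Nat.sub_add_cancel (Nat.one_le_iff_ne_zero.mpr hej)]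
    have hdvd2 : q j ∣ c * q i := by
      rw [h1, hqi]
      obtain ⟨t, ht⟩ := hdvd
      refine mul_dvd_mul_left c ?_
      rw [ht]
      exact dvd_pow (dvd_mul_right _ _) hei
    set base : k[X] →ₗ[k[X]] Cq j :=
      (Submodule.span k[X] {q j}).mkQ ∘ₗ (c • LinearMap.id) with hbase
    have hker : Submodule.span k[X] {q i} ≤ LinearMap.ker base := by
      rw [Submodule.span_le, Set.singleton_subset_iff]
      simp only [SetLike.mem_coe, LinearMap.mem_ker, hbase, LinearMap.comp_apply,
        LinearMap.smul_apply, LinearMap.id_apply, Submodule.mkQ_apply]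
      refine (Submodule.Quotient.mk_eq_zero _).mpr ?_
      rw [smul_eq_mul]
      obtain ⟨a, ha⟩ := hdvd2
      exact Submodule.mem_span_singleton.mpr ⟨a, by rw [smul_eq_mul, mul_comm]; exact ha.symm⟩
    set g0 : Cq i →ₗ[k[X]] Cq j := Submodule.liftQ _ base hker with hg0
    have hg0one : g0 (Submodule.Quotient.mk 1) = Submodule.Quotient.mk c := by
      rw [hg0]
      show base 1 = _
      simp only [hbase, LinearMap.comp_apply, LinearMap.smul_apply, LinearMap.id_apply,
        smul_eq_mul, mul_one, Submodule.mkQ_apply]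
      rfl
    have hcne : (Submodule.Quotient.mk c : Cq j) ≠ 0 := by
      rw [Ne, Submodule.Quotient.mk_eq_zero]
      intro hmem
      obtain ⟨a, ha⟩ := Submodule.mem_span_singleton.mp hmem
      have : q j ∣ c := Dvd.intro_left a (by rw [← smul_eq_mul]; exact ha)
      rw [hqj, hc] at this
      have := (pow_dvd_pow_iff (hp j).ne_zero (hp j).not_isUnit).mp this
      omega
    -- the ambient direct sum
    set DS : Type := DirectSum ι fun l => Cq l with hDSdef
    -- multiplication by an element, as a k[X]-linear endomorphism
    let mulLin : ∀ l, Cq l → (Cq l →ₗ[k[X]] Cq l) := fun l cc =>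
      { toFun := fun z => cc * z
        map_add' := mul_add cc
        map_smul' := fun f z => by simpa using mul_smul_comm f cc z }
    let Emap : ((∀ l, Cq l) × k) → (DS →ₗ[k[X]] DS) := fun d =>
      (∑ l, (DirectSum.lof k[X] ι Cq l) ∘ₗ (mulLin l (d.1 l)) ∘ₗ (DirectSum.component k[X] ι Cq l))
      + (DirectSum.lof k[X] ι Cq j) ∘ₗ (mulLin j (Submodule.Quotient.mk (C d.2))) ∘ₗ g0
          ∘ₗ (DirectSum.component k[X] ι Cq i)
    let endV : ((∀ l, Cq l) × k) → (V →ₗ[k] V) := fun d =>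
      (Module.AEval.of k V φ).symm.toLinearMap
        ∘ₗ ((eDS'.symm.toLinearMap ∘ₗ Emap d ∘ₗ eDS'.toLinearMap).restrictScalars k)
        ∘ₗ (Module.AEval.of k V φ).toLinearMap
    let matF : ((∀ l, Cq l) × k) → Matrix (Fin N) (Fin N) k := fun d =>
      Matrix.toLinAlgEquiv'.symm (endV d)
    have hendV : ∀ d x, endV d x =
        (Module.AEval.of k V φ).symm (eDS'.symm (Emap d (eDS' ((Module.AEval.of k V φ) x)))) :=
      fun d x => rfl
    have hmem : ∀ d, matF d ∈ Subalgebra.centralizer k ({B} : Set (Matrix (Fin N) (Fin N) k)) := by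
      intro d
      rw [Subalgebra.mem_centralizer_iff]
      intro g hgmem
      rw [Set.mem_singleton_iff] at hgmem
      rw [hgmem]
      show B * matF d = matF d * B
      apply Matrix.toLinAlgEquiv'.injective
      rw [_root_.map_mul, _root_.map_mul]
      have hB : Matrix.toLinAlgEquiv' B = φ := rfl
      rw [hB, Matrix.toLinAlgEquiv'.apply_symm_apply]
      apply LinearMap.ext
      intro x
      show φ (endV d x) = endV d (φ x)
      have h1 : (Module.AEval.of k V φ) (φ x) = (X : k[X]) • (Module.AEval.of k V φ) x :=
        (Module.AEval.X_smul_of φ x).symm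
      rw [hendV, hendV, h1, _root_.map_smul, _root_.map_smul, _root_.map_smul,
        Module.AEval.of_symm_X_smul]
      rfl
    have hmulLin : ∀ l (cc : Cq l) z, mulLin l cc z = cc * z := fun _ _ _ => rfl
    have hone : ∀ l, (Submodule.Quotient.mk (1 : k[X]) : Cq l) = 1 := fun _ => rfl
    have hsymm_smul : ∀ (a : k) (z : DS), eDS'.symm (a • z) = a • eDS'.symm z := fun a z =>
      (eDS'.restrictScalars k).symm.map_smul a z
    have hfwd_smul : ∀ (a : k) (m : M), eDS' (a • m) = a • eDS' m := fun a m =>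
      (eDS'.restrictScalars k).map_smul a m
    have hEadd : ∀ d d' (y : DS), Emap (d + d') y = Emap d y + Emap d' y := by
      intro d d' y
      simp only [Emap, LinearMap.add_apply, LinearMap.sum_apply, LinearMap.coe_comp,
        Function.comp_apply, hmulLin, Prod.fst_add, Pi.add_apply, Prod.snd_add, map_add,
        add_mul, Finset.sum_add_distrib, Submodule.Quotient.mk_add]
      abel
    have hEsmul : ∀ (a : k) d (y : DS), Emap (a • d) y = a • Emap d y := by
      intro a d y
      have hCsmul : (Submodule.Quotient.mk (C ((a • d).2)) : Cq j)
          = a • Submodule.Quotient.mk (C d.2) := by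
        rw [← Submodule.Quotient.mk_smul]
        congr 1
        rw [Prod.smul_snd, smul_eq_mul, smul_eq_C_mul, _root_.map_mul]
      simp only [Emap, LinearMap.add_apply, LinearMap.sum_apply, LinearMap.coe_comp,
        Function.comp_apply, hmulLin, Prod.smul_fst, Pi.smul_apply, hCsmul, smul_mul_assoc,
        LinearMap.map_smul_of_tower, smul_add, Finset.smul_sum]
    have hVadd : ∀ d d', endV (d + d') = endV d + endV d' := by
      intro d d'
      refine LinearMap.ext fun x => ?_
      rw [LinearMap.add_apply, hendV, hendV, hendV, hEadd, _root_.map_add, _root_.map_add]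
    have hVsmul : ∀ (a : k) d, endV (a • d) = a • endV d := by
      intro a d
      refine LinearMap.ext fun x => ?_
      rw [LinearMap.smul_apply, hendV, hendV, hEsmul, hsymm_smul, _root_.map_smul]
    -- injectivity at the level of d
    have hinj : ∀ d, matF d = 0 → d = 0 := by
      intro d hd
      have hE0 : ∀ y : DS, Emap d y = 0 := by
        have h2 : endV d = 0 := by
          have h := congrArg (⇑Matrix.toLinAlgEquiv') hd
          rwa [Matrix.toLinAlgEquiv'.apply_symm_apply, _root_.map_zero] at h
        intro y
        have h3 : endV d ((Module.AEval.of k V φ).symm (eDS'.symm y)) = 0 := by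
          rw [h2]; rfl
        rw [hendV, LinearEquiv.apply_symm_apply, LinearEquiv.apply_symm_apply] at h3
        have h4 := congrArg (⇑(Module.AEval.of k V φ)) h3
        rw [LinearEquiv.apply_symm_apply, _root_.map_zero] at h4
        have h5 := congrArg (⇑eDS') h4
        rwa [LinearEquiv.apply_symm_apply, _root_.map_zero] at h5
      have hEval : ∀ l : ι, Emap d (DirectSum.lof k[X] ι Cq l (Submodule.Quotient.mk 1)) =
          DirectSum.lof k[X] ι Cq l (d.1 l * Submodule.Quotient.mk 1)
          + DirectSum.lof k[X] ι Cq j ((Submodule.Quotient.mk (C d.2)) *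
              g0 (DirectSum.component k[X] ι Cq i
                (DirectSum.lof k[X] ι Cq l (Submodule.Quotient.mk 1)))) := by
        intro l
        simp only [Emap, LinearMap.add_apply, LinearMap.sum_apply, LinearMap.coe_comp,
          Function.comp_apply, hmulLin]
        congr 1
        rw [Finset.sum_eq_single l]
        · rw [DirectSum.component.lof_self]
        · intro l' _ hl'
          rw [DirectSum.component.of, dif_neg (fun hh => hl' hh.symm), mul_zero, map_zero]
        · intro habs
          exact absurd (Finset.mem_univ l) habs
      have h1 : ∀ l, d.1 l = 0 := by
        intro l
        have h := hE0 (DirectSum.lof k[X] ι Cq l (Submodule.Quotient.mk 1))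
        rw [hEval l] at h
        by_cases hli : l = i
        · subst hli
          have hcomp := congrArg (DirectSum.component k[X] ι Cq l) h
          rw [_root_.map_add, DirectSum.component.lof_self, DirectSum.component.of,
            dif_neg (fun hh => hij (hh.symm)), add_zero, _root_.map_zero] at hcomp
          rw [hone, mul_one] at hcomp
          exact hcomp
        · rw [DirectSum.component.of, dif_neg (fun hh => hli hh), map_zero, mul_zero,
            map_zero, add_zero] at h
          have hcomp := congrArg (DirectSum.component k[X] ι Cq l) h
          rw [DirectSum.component.lof_self, _root_.map_zero] at hcomp
          rw [hone, mul_one] at hcomp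
          exact hcomp
      have h2 : d.2 = 0 := by
        have h := hE0 (DirectSum.lof k[X] ι Cq i (Submodule.Quotient.mk 1))
        rw [hEval i] at h
        have hcomp := congrArg (DirectSum.component k[X] ι Cq j) h
        rw [_root_.map_add, DirectSum.component.of, dif_neg (fun hh => hij hh),
          DirectSum.component.lof_self, DirectSum.component.lof_self, zero_add,
          _root_.map_zero, hg0one] at hcomp
        have hsm : d.2 • (Submodule.Quotient.mk c : Cq j) = 0 := by
          rw [← algebraMap_smul k[X] d.2 (Submodule.Quotient.mk c : Cq j)]
          rw [show (algebraMap k k[X] d.2) = C d.2 from rfl]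
          rw [show (C d.2) • (Submodule.Quotient.mk c : Cq j)
            = (Submodule.Quotient.mk (C d.2) : Cq j) * Submodule.Quotient.mk c from rfl]
          exact hcomp
        rcases smul_eq_zero.mp hsm with h' | h'
        · exact h'
        · exact absurd h' hcne
      have : d = (0, 0) := Prod.ext (funext h1) h2
      exact this
    -- assemble the linear map into the centralizer
    set S := Subalgebra.centralizer k ({B} : Set (Matrix (Fin N) (Fin N) k)) with hS
    let F : ((∀ l, Cq l) × k) →ₗ[k] S :=
      { toFun := fun d => ⟨matF d, hmem d⟩
        map_add' := fun d d' => Subtype.ext (by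
          show matF (d + d') = matF d + matF d'
          show Matrix.toLinAlgEquiv'.symm (endV (d + d')) = _
          rw [hVadd, _root_.map_add])
        map_smul' := fun a d => Subtype.ext (by
          show matF (a • d) = a • matF d
          show Matrix.toLinAlgEquiv'.symm (endV (a • d)) = _
          rw [hVsmul, _root_.map_smul]) }
    have hFinj : Function.Injective F := by
      rw [injective_iff_map_eq_zero]
      intro d hd
      apply hinj
      have h0 : matF d = ((0 : S) : Matrix (Fin N) (Fin N) k) := congrArg Subtype.val hd
      rw [ZeroMemClass.coe_zero] at h0
      exact h0
    have hfinS : FiniteDimensional k S := inferInstance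
    have hle := LinearMap.finrank_le_finrank_of_injective hFinj
    have hfr : Module.finrank k ((∀ l, Cq l) × k) = N + 1 := by
      rw [Module.finrank_prod, hNdim, Module.finrank_self]
    rw [hfr] at hle
    have hreg' : Module.finrank k ↥S ≤ N := hreg
    omega


set_option maxHeartbeats 1600000 in
/-- If `β ∈ M_N(𝔬_r)` is regular then the centralizer of `β` in `GL_N(𝔬_r)` is the
unit group of the subring `𝔬_r[β]`; in particular it is abelian. -/
theorem centralizer_of_regular_eq_units_adjoin
    (o : Type) [CommRing o] [IsDomain o] [IsDiscreteValuationRing o]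
    [Finite (ResidueField o)] (N r : ℕ) (hN : 2 ≤ N) (hr : 2 ≤ r)
    (β : Matrix (Fin N) (Fin N) (o ⧸ (maximalIdeal o) ^ r))
    (hreg : Module.finrank (ResidueField o)
      ↥(Subalgebra.centralizer (ResidueField o)
        ({(resRed o r (by omega)).mapMatrix β} :
          Set (Matrix (Fin N) (Fin N) (ResidueField o)))) = N) :
    (∀ g : GL (Fin N) (o ⧸ (maximalIdeal o) ^ r),
      Commute (g : Matrix (Fin N) (Fin N) (o ⧸ (maximalIdeal o) ^ r)) β ↔
        (g : Matrix (Fin N) (Fin N) (o ⧸ (maximalIdeal o) ^ r)) ∈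
          Algebra.adjoin (o ⧸ (maximalIdeal o) ^ r) ({β} : Set _)) ∧
    ∀ g h : GL (Fin N) (o ⧸ (maximalIdeal o) ^ r),
      Commute (g : Matrix (Fin N) (Fin N) (o ⧸ (maximalIdeal o) ^ r)) β →
      Commute (h : Matrix (Fin N) (Fin N) (o ⧸ (maximalIdeal o) ^ r)) β →
      Commute g h := by
  classical
  have hrne : r ≠ 0 := by omega
  set π : (o ⧸ (maximalIdeal o) ^ r) →+* ResidueField o := resRed o r hrne with hπ
  have hπmk : ∀ x : o, π (Ideal.Quotient.mk _ x) = IsLocalRing.residue o x := fun x =>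
    Ideal.Quotient.lift_mk _ _ _
  have hsurj : Function.Surjective π := by
    intro y
    obtain ⟨x, hx⟩ := Ideal.Quotient.mk_surjective (I := maximalIdeal o) y
    exact ⟨Ideal.Quotient.mk _ x, by rw [hπmk]; exact hx⟩
  have hunit : ∀ a : (o ⧸ (maximalIdeal o) ^ r), π a ≠ 0 → IsUnit a := by
    intro a ha
    obtain ⟨x, rfl⟩ := Ideal.Quotient.mk_surjective a
    have hx : x ∉ maximalIdeal o := by
      intro hmem
      exact ha (by rw [hπmk]; exact Ideal.Quotient.eq_zero_iff_mem.mpr hmem)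
    have hux : IsUnit x := by
      by_contra hnu
      exact hx ((IsLocalRing.mem_maximalIdeal x).mpr hnu)
    exact hux.map (Ideal.Quotient.mk _)
  set Bk : Matrix (Fin N) (Fin N) (ResidueField o) := π.mapMatrix β with hBk
  obtain ⟨vk, hvk⟩ := exists_cyclic_vector Bk (le_of_eq hreg)
  choose v hv using fun i => hsurj (vk i)
  set P : Matrix (Fin N) (Fin N) (o ⧸ (maximalIdeal o) ^ r) := Matrix.of fun (x i : Fin N) => (β ^ (i : ℕ) *ᵥ v) x with hP
  have hPmap : ∀ x i, π (P x i) = (Bk ^ (i : ℕ) *ᵥ vk) x := by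
    intro x i
    show π ((β ^ (i : ℕ) *ᵥ v) x) = (Bk ^ (i : ℕ) *ᵥ vk) x
    rw [Matrix.mulVec, Matrix.mulVec, dotProduct, dotProduct, map_sum]
    refine Finset.sum_congr rfl fun y _ => ?_
    rw [_root_.map_mul, hv y]
    congr 1
    rw [hBk, ← map_pow]
    rfl
  have hdetne : π P.det ≠ 0 := by
    have hmapdet : π P.det = (Matrix.of fun (x i : Fin N) => (Bk ^ (i : ℕ) *ᵥ vk) x).det := by
      rw [RingHom.map_det]
      congr 1
      ext x i
      rw [RingHom.mapMatrix_apply, Matrix.map_apply]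
      exact hPmap x i
    rw [hmapdet]
    have hunitP : IsUnit (Matrix.of fun (x i : Fin N) => (Bk ^ (i : ℕ) *ᵥ vk) x) := by
      rw [← Matrix.linearIndependent_cols_iff_isUnit]
      exact hvk
    exact ((Matrix.isUnit_iff_isUnit_det _).mp hunitP).ne_zero
  have hdetunit : IsUnit P.det := hunit _ hdetne
  have hInv : Invertible P := P.invertibleOfIsUnitDet hdetunit
  -- main step: any matrix commuting with β is a polynomial in β
  have main : ∀ A : Matrix (Fin N) (Fin N) (o ⧸ (maximalIdeal o) ^ r), A * β = β * A →
      A ∈ Algebra.adjoin (o ⧸ (maximalIdeal o) ^ r) ({β} : Set (Matrix (Fin N) (Fin N) (o ⧸ (maximalIdeal o) ^ r))) := by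
    intro A hA
    set cvec : Fin N → (o ⧸ (maximalIdeal o) ^ r) := (⅟P) *ᵥ (A *ᵥ v) with hcvec
    set Q : Matrix (Fin N) (Fin N) (o ⧸ (maximalIdeal o) ^ r) := ∑ i0 : Fin N, cvec i0 • β ^ (i0 : ℕ) with hQ
    have h1 : Q *ᵥ v = ∑ i0 : Fin N, cvec i0 • (β ^ (i0 : ℕ) *ᵥ v) := by
      funext x
      rw [hQ]
      simp only [Matrix.mulVec, dotProduct, Matrix.sum_apply, Matrix.smul_apply,
        Finset.sum_apply, Pi.smul_apply, smul_eq_mul, Finset.sum_mul, Finset.mul_sum]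
      rw [Finset.sum_comm]
      exact Finset.sum_congr rfl fun i0 _ => Finset.sum_congr rfl fun y _ => by ring
    have h2 : P *ᵥ cvec = ∑ i0 : Fin N, cvec i0 • (β ^ (i0 : ℕ) *ᵥ v) := by
      funext x
      simp only [Matrix.mulVec, dotProduct, Finset.sum_apply, Pi.smul_apply,
        smul_eq_mul]
      exact Finset.sum_congr rfl fun i0 _ => by rw [mul_comm]; rfl
    have hQv : Q *ᵥ v = A *ᵥ v := by
      rw [h1, ← h2, hcvec, Matrix.mulVec_mulVec, mul_invOf_self, Matrix.one_mulVec]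
    have hQc : Q * β = β * Q := by
      rw [hQ, Finset.sum_mul, Finset.mul_sum]
      refine Finset.sum_congr rfl fun i0 _ => ?_
      rw [Matrix.smul_mul, Matrix.mul_smul, ← pow_succ, ← pow_succ']
    have hAQβ : Commute (A - Q) β := by
      show (A - Q) * β = β * (A - Q)
      rw [sub_mul, mul_sub, hA, hQc]
    have hAQv : (A - Q) *ᵥ v = 0 := by
      rw [Matrix.sub_mulVec, hQv, sub_self]
    have hzero : (A - Q) * P = 0 := by
      ext x i0
      have hcol : ((A - Q) * P) x i0 = ((A - Q) *ᵥ (β ^ (i0 : ℕ) *ᵥ v)) x := by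
        rw [Matrix.mul_apply, Matrix.mulVec, dotProduct]
        rfl
      rw [hcol, Matrix.mulVec_mulVec, (hAQβ.pow_right (i0 : ℕ)).eq, ← Matrix.mulVec_mulVec,
        hAQv, Matrix.mulVec_zero]
      rfl
    have hAQ : A = Q := by
      have h5 : A - Q = 0 := by
        calc A - Q = (A - Q) * (P * ⅟P) := by rw [mul_invOf_self, mul_one]
        _ = ((A - Q) * P) * ⅟P := by rw [Matrix.mul_assoc]
        _ = 0 := by rw [hzero, Matrix.zero_mul]
      exact sub_eq_zero.mp h5
    rw [hAQ, hQ]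
    exact Subalgebra.sum_mem _ fun i0 _ => Subalgebra.smul_mem _
      (Subalgebra.pow_mem _ (Algebra.self_mem_adjoin_singleton _ β) _) _
  have conv : ∀ A : Matrix (Fin N) (Fin N) (o ⧸ (maximalIdeal o) ^ r),
      A ∈ Algebra.adjoin (o ⧸ (maximalIdeal o) ^ r) ({β} : Set (Matrix (Fin N) (Fin N) (o ⧸ (maximalIdeal o) ^ r))) → Commute A β := by
    intro A hA
    exact (Algebra.commute_of_mem_adjoin_self hA).symm
  refine ⟨fun g => ⟨fun hcom => main _ hcom, fun hmem => conv _ hmem⟩, ?_⟩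
  intro g h hgc hhc
  have hg := main _ hgc
  have hh := main _ hhc
  rw [Algebra.adjoin_singleton_eq_range_aeval] at hg hh
  obtain ⟨f1, hf1⟩ := hg
  obtain ⟨f2, hf2⟩ := hh
  show g * h = h * g
  apply Units.ext
  rw [Units.val_mul, Units.val_mul]
  show (g : Matrix (Fin N) (Fin N) (o ⧸ (maximalIdeal o) ^ r)) * (h : Matrix (Fin N) (Fin N) (o ⧸ (maximalIdeal o) ^ r)) = _
  rw [← hf1, ← hf2, ← _root_.map_mul, ← _root_.map_mul, mul_comm]

end Aux
end

section
/- (Howe) Let V be a finite-dimensional F_p-vector space equipped with an alternating bilinear form α, and let P be a finite p-group acting linearly on V preserving α. Then there exists a maximal isotropic subspace U of V which is P-invariant. -/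
/-- (Howe) Let `V` be a finite-dimensional `F_p`-vector space with an alternating
bilinear form `α`, and let `P` be a finite `p`-group acting linearly on `V`
preserving `α`. Then there is a `P`-invariant maximal isotropic subspace of `V`. -/
theorem exists_invariant_maximal_isotropic
    (p : ℕ) [Fact p.Prime] (V : Type) [AddCommGroup V] [Module (ZMod p) V]
    [FiniteDimensional (ZMod p) V]
    (α : V →ₗ[ZMod p] V →ₗ[ZMod p] ZMod p) (halt : ∀ v, α v v = 0)
    (P : Type) [Group P] [Finite P] (hP : IsPGroup p P)
    (ρ : P →* (V ≃ₗ[ZMod p] V))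
    (hpres : ∀ (g : P) (v w : V), α (ρ g v) (ρ g w) = α v w) :
    ∃ U : Submodule (ZMod p) V,
      (∀ u ∈ U, ∀ w ∈ U, α u w = 0) ∧
      (∀ v : V, (∀ u ∈ U, α v u = 0) → v ∈ U) ∧
      ∀ (g : P), ∀ u ∈ U, ρ g u ∈ U := by
  classical
  haveI : Fintype (ZMod p) := inferInstance
  haveI : Module.Finite (ZMod p) V := inferInstance
  haveI : Finite V := Module.finite_of_finite (ZMod p)
  haveI : Fintype V := Fintype.ofFinite V
  have hskew : ∀ v w : V, α v w = - α w v := by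
    intro v w
    have h := halt (v + w)
    simp only [map_add, LinearMap.add_apply, halt, zero_add, add_zero] at h
    linear_combination h
  -- the set of invariant isotropic subspaces
  set T : Set (Submodule (ZMod p) V) :=
    {U | (∀ u ∈ U, ∀ w ∈ U, α u w = 0) ∧ ∀ g : P, ∀ u ∈ U, ρ g u ∈ U} with hT
  have hTfin : T.Finite := Set.toFinite T
  have hTne : T.Nonempty := ⟨⊥, by simp [hT]⟩
  obtain ⟨U, hU, hmax⟩ :=
    Set.Finite.exists_maximalFor (fun U : Submodule (ZMod p) V => Module.finrank (ZMod p) U) T hTfin hTne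
  refine ⟨U, hU.1, ?_, hU.2⟩
  intro v hv
  by_contra hvU
  -- set up the quotient action
  have hle : ∀ g : P, U ≤ U.comap (ρ g : V →ₗ[ZMod p] V) := fun g x hx => hU.2 g x hx
  set sm : P → (V ⧸ U) → (V ⧸ U) :=
    fun g => Submodule.mapQ U U (ρ g : V →ₗ[ZMod p] V) (hle g) with hsm
  have sm_mk : ∀ (g : P) (x : V), sm g (Submodule.Quotient.mk x)
      = Submodule.Quotient.mk (ρ g x) := by
    intro g x
    simp [hsm, Submodule.mapQ_apply]
  have sm_lin : ∀ g : P, IsLinearMap (ZMod p) (sm g) := fun g =>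
    (Submodule.mapQ U U (ρ g : V →ₗ[ZMod p] V) (hle g)).isLinear
  letI instAct : MulAction P (V ⧸ U) :=
    { smul := sm
      one_smul := by
        intro x
        obtain ⟨x, rfl⟩ := Submodule.Quotient.mk_surjective U x
        show sm 1 _ = _
        rw [sm_mk]
        simp
      mul_smul := by
        intro g h x
        obtain ⟨x, rfl⟩ := Submodule.Quotient.mk_surjective U x
        show sm (g * h) _ = sm g (sm h _)
        rw [sm_mk, sm_mk, sm_mk, map_mul]
        rfl }
  -- the orthogonal complement of U
  set Uperp : Submodule (ZMod p) V :=
    { carrier := {x | ∀ u ∈ U, α x u = 0}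
      add_mem' := by
        intro a b ha hb u hu
        simp [map_add, ha u hu, hb u hu]
      zero_mem' := by simp
      smul_mem' := by
        intro c a ha u hu
        simp [map_smul, ha u hu] } with hUperp
  have hρperp : ∀ (g : P) (x : V), x ∈ Uperp → ρ g x ∈ Uperp := by
    intro g x hx u hu
    have : (ρ g) ((ρ g⁻¹) u) = u := by
      rw [map_inv]
      exact (ρ g).apply_symm_apply u
    calc α (ρ g x) u = α (ρ g x) (ρ g (ρ g⁻¹ u)) := by rw [this]
      _ = α x (ρ g⁻¹ u) := hpres g x _
      _ = 0 := hx _ (hU.2 g⁻¹ u hu)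
  -- W = image of Uperp in the quotient
  set W : Submodule (ZMod p) (V ⧸ U) := Uperp.map U.mkQ with hW
  have hWinv : ∀ (g : P) (x : V ⧸ U), x ∈ W → sm g x ∈ W := by
    rintro g x ⟨y, hy, rfl⟩
    exact ⟨ρ g y, hρperp g y hy, (sm_mk g y).symm⟩
  letI instActW : MulAction P W :=
    { smul := fun g x => ⟨sm g x.1, hWinv g x.1 x.2⟩
      one_smul := by
        intro x
        apply Subtype.ext
        exact one_smul P x.1
      mul_smul := by
        intro g h x
        apply Subtype.ext
        exact mul_smul g h x.1 }
  -- fixed points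
  have hmod := hP.card_modEq_card_fixedPoints W
  haveI : FiniteDimensional (ZMod p) W := inferInstance
  haveI : Fintype W := Fintype.ofFinite W
  have hcardW : Fintype.card W = p ^ Module.finrank (ZMod p) W := by
    have := Module.card_eq_pow_finrank (K := ZMod p) (V := W)
    rwa [ZMod.card] at this
  have hWne : 0 < Module.finrank (ZMod p) W := by
    rw [Module.finrank_pos_iff]
    refine ⟨⟨⟨Submodule.Quotient.mk v, ⟨v, hv, rfl⟩⟩, 0, ?_⟩⟩
    intro h
    apply hvU
    have : (Submodule.Quotient.mk v : V ⧸ U) = 0 := congrArg Subtype.val h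
    exact (Submodule.Quotient.mk_eq_zero U).mp this
  have hpdvd : p ∣ Nat.card W := by
    rw [Nat.card_eq_fintype_card, hcardW]
    exact dvd_pow_self p hWne.ne'
  have hfixdvd : p ∣ Nat.card (MulAction.fixedPoints P W) :=
    Nat.modEq_zero_iff_dvd.mp (((Nat.modEq_zero_iff_dvd.mpr hpdvd).symm.trans hmod).symm)
  haveI : Fintype (MulAction.fixedPoints P W) := Fintype.ofFinite _
  have h0fix : (⟨0, W.zero_mem⟩ : W) ∈ MulAction.fixedPoints P W := by
    intro g
    apply Subtype.ext
    show sm g 0 = 0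
    exact (sm_lin g).map_zero
  have hcardfix : 1 < Fintype.card (MulAction.fixedPoints P W) := by
    have hpos : 0 < Fintype.card (MulAction.fixedPoints P W) :=
      Fintype.card_pos_iff.mpr ⟨⟨_, h0fix⟩⟩
    have hple : p ≤ Fintype.card (MulAction.fixedPoints P W) :=
      Nat.le_of_dvd hpos (by rwa [← Nat.card_eq_fintype_card])
    have h2 : 2 ≤ p := (Fact.out : p.Prime).two_le
    omega
  obtain ⟨w, hwne⟩ := Fintype.exists_ne_of_one_lt_card hcardfix
    ⟨⟨0, W.zero_mem⟩, h0fix⟩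
  obtain ⟨v', hv'perp, hv'eq⟩ := w.1.2
  have hw0 : (w.1 : V ⧸ U) ≠ 0 := by
    intro h
    exact hwne (Subtype.ext (Subtype.ext h))
  have hv'U : v' ∉ U := by
    intro h
    apply hw0
    rw [← hv'eq]
    exact (Submodule.Quotient.mk_eq_zero U).mpr h
  have hfixed : ∀ g : P, ρ g v' - v' ∈ U := by
    intro g
    have h1 : sm g (w.1 : V ⧸ U) = (w.1 : V ⧸ U) := congrArg Subtype.val (w.2 g)
    rw [← hv'eq] at h1
    rw [show U.mkQ v' = Submodule.Quotient.mk v' from rfl, sm_mk] at h1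
    exact (Submodule.Quotient.eq U).mp h1
  -- the enlarged subspace
  set U' : Submodule (ZMod p) V := U ⊔ (ZMod p) ∙ v' with hU'
  have hmem : ∀ x : V, x ∈ U' ↔ ∃ y ∈ U, ∃ c : ZMod p, x = y + c • v' := by
    intro x
    rw [hU', Submodule.mem_sup]
    constructor
    · rintro ⟨y, hy, z, hz, rfl⟩
      obtain ⟨c, rfl⟩ := Submodule.mem_span_singleton.mp hz
      exact ⟨y, hy, c, rfl⟩
    · rintro ⟨y, hy, c, rfl⟩
      exact ⟨y, hy, c • v', Submodule.mem_span_singleton.mpr ⟨c, rfl⟩, rfl⟩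
  have hU'T : U' ∈ T := by
    constructor
    · intro u hu x hx
      obtain ⟨y, hy, c, rfl⟩ := (hmem u).mp hu
      obtain ⟨y₂, hy₂, c₂, rfl⟩ := (hmem x).mp hx
      have e1 : α y y₂ = 0 := hU.1 y hy y₂ hy₂
      have e2 : α v' y₂ = 0 := hv'perp y₂ hy₂
      have e3 : α y v' = 0 := by rw [hskew, hv'perp y hy, neg_zero]
      have e4 : α v' v' = 0 := halt v'
      simp only [map_add, map_smul, LinearMap.add_apply, LinearMap.smul_apply,
        smul_eq_mul, e1, e2, e3, e4]
      ring
    · intro g u hu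
      obtain ⟨y, hy, c, rfl⟩ := (hmem u).mp hu
      rw [hmem]
      refine ⟨ρ g y + c • (ρ g v' - v'), ?_, c, ?_⟩
      · exact U.add_mem (hU.2 g y hy) (U.smul_mem c (hfixed g))
      · rw [map_add, map_smul]
        module
  have hlt : U < U' := by
    refine lt_of_le_of_ne le_sup_left ?_
    intro h
    apply hv'U
    rw [h]
    exact (hmem v').mpr ⟨0, U.zero_mem, 1, by simp⟩
  have hlt2 := Submodule.finrank_lt_finrank_of_lt hlt
  have heq : Module.finrank (ZMod p) U' ≤ Module.finrank (ZMod p) U := hmax hU'T (le_of_lt hlt2)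
  omega
end

section
/- Let A ⊆ M_N(o_r) be the preimage of a parabolic subalgebra of M_N(F_q) under reduction mod p, let P be the preimage of its nilpotent radical, and let e be the length of the defining flag. Then p·A = A·p = P^e. -/
open IsLocalRing

open Submodule Set IsLocalRing

lemma chain_basis {k V : Type} [Field k] [AddCommGroup V] [Module k V] [FiniteDimensional k V] :
    ∀ (n : ℕ) (F : ℕ → Submodule k V), (∀ i, F i ≤ F (i+1)) → F 0 = ⊥ →
    ∃ (ι : Type) (_ : Fintype ι) (v : ι → V) (bl : ι → ℕ),
      LinearIndependent k v ∧ (∀ i, bl i < n) ∧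
      (∀ t, t ≤ n → F t = span k (v '' {i | bl i < t})) := by
  intro n
  induction n with
  | zero =>
    intro F _ hbot
    refine ⟨Fin 0, inferInstance, Fin.elim0, Fin.elim0, linearIndependent_empty_type, by simp,
      fun t ht => ?_⟩
    interval_cases t
    have : {i : Fin 0 | Fin.elim0 i < 0} = ∅ := by ext i; exact i.elim0
    simp [hbot, this]
  | succ n ih =>
    intro F hmono hbot
    obtain ⟨ι, _, v, bl, hind, hlt, hspan⟩ := ih F hmono hbot
    -- complement of F n inside F (n+1)
    obtain ⟨C, hC⟩ := Submodule.exists_isCompl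
      (Submodule.comap (F (n+1)).subtype (F n))
    set W : Submodule k V := C.map (F (n+1)).subtype with hW
    have hinj : Function.Injective (F (n+1)).subtype := Submodule.injective_subtype _
    have hFn : (Submodule.comap (F (n+1)).subtype (F n)).map (F (n+1)).subtype = F n := by
      rw [Submodule.map_comap_subtype, inf_eq_right.mpr (hmono n)]
    have hdis : Disjoint (F n) W := by
      rw [disjoint_iff, ← hFn, hW, ← Submodule.map_inf _ hinj, disjoint_iff.mp hC.disjoint,
        Submodule.map_bot]
    have hsup : F n ⊔ W = F (n+1) := by
      rw [← hFn, hW, ← Submodule.map_sup, hC.sup_eq_top, Submodule.map_top,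
        Submodule.range_subtype]
    set d := Module.finrank k ↥W with hd
    set b : Module.Basis (Fin d) k ↥W := Module.finBasis k ↥W with hb
    set w : Fin d → V := fun i => ((b i : ↥W) : V) with hw'
    have hindw : LinearIndependent k w := b.linearIndependent.map' W.subtype W.ker_subtype
    have hspanw : span k (Set.range w) = W := by
      have : Set.range w = W.subtype '' (Set.range b) := by
        rw [hw']; ext x; simp
      rw [this, ← Submodule.map_span, b.span_eq, Submodule.map_top, Submodule.range_subtype]
    have hspanv : span k (Set.range v) = F n := by
      have h1 := hspan n le_rfl
      have : v '' {i | bl i < n} = Set.range v := by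
        ext x; constructor
        · rintro ⟨i, _, rfl⟩; exact ⟨i, rfl⟩
        · rintro ⟨i, rfl⟩; exact ⟨i, hlt i, rfl⟩
      rw [h1, this]
    refine ⟨ι ⊕ Fin d, inferInstance, Sum.elim v w, Sum.elim bl (fun _ => n),
      hind.sum_type hindw (by rw [hspanv, hspanw]; exact hdis), ?_, ?_⟩
    · rintro (i | i) <;> simp [hlt _, Nat.lt_succ_of_lt (hlt _)]
    · intro t ht
      rcases Nat.lt_or_ge t (n+1) with h | h
      · have ht' : t ≤ n := by omega
        rw [hspan t ht']
        congr 1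
        ext x
        constructor
        · rintro ⟨i, hi, rfl⟩; exact ⟨Sum.inl i, by simpa using hi, rfl⟩
        · rintro ⟨(i | i), hi, rfl⟩
          · exact ⟨i, by simpa using hi, rfl⟩
          · simp only [Set.mem_setOf_eq, Sum.elim_inr] at hi; omega
      · have ht' : t = n + 1 := by omega
        subst ht'
        have huniv : {i : ι ⊕ Fin d | Sum.elim bl (fun _ => n) i < n + 1} = Set.univ := by
          ext (i | i) <;> simp [Nat.lt_succ_of_lt (hlt _), Nat.le_of_lt (hlt _)]
        rw [huniv, Set.image_univ, Sum.elim_range, Submodule.span_union, hspanv, hspanw, hsup]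

lemma exists_adapted_basis {k : Type} [Field k] {N e : ℕ} (he : 1 ≤ e)
    (flag : Fin (e+1) → Submodule k (Fin N → k))
    (hmono : StrictMono flag) (hbot : flag 0 = ⊥) (htop : flag (Fin.last e) = ⊤) :
    ∃ (B : Module.Basis (Fin N) k (Fin N → k)) (bl : Fin N → ℕ), (∀ i, bl i < e) ∧
      ∀ t : Fin (e+1), flag t = span k (⇑B '' {i | bl i < (t : ℕ)}) := by
  set F : ℕ → Submodule k (Fin N → k) := fun t => flag ⟨min t e, by omega⟩ with hF
  have hFmono : ∀ i, F i ≤ F (i+1) := by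
    intro i
    exact hmono.monotone (by simp only [Fin.mk_le_mk]; omega)
  have hFbot : F 0 = ⊥ := by
    rw [hF]; simpa using hbot
  obtain ⟨ι, _, v, bl, hind, hlt, hspan⟩ := chain_basis e F hFmono hFbot
  have hspantop : span k (Set.range v) = ⊤ := by
    have h1 := hspan e le_rfl
    have h2 : v '' {i | bl i < e} = Set.range v := by
      ext x; constructor
      · rintro ⟨i, _, rfl⟩; exact ⟨i, rfl⟩
      · rintro ⟨i, rfl⟩; exact ⟨i, hlt i, rfl⟩
    have h3 : F e = ⊤ := by
      rw [hF]
      simpa [Fin.last] using htop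
    rw [← h2, ← h1, h3]
  set B₀ : Module.Basis ι k (Fin N → k) := Module.Basis.mk hind (by rw [hspantop]) with hB₀def
  have hB₀ : ∀ i, B₀ i = v i := fun i => by rw [hB₀def, Module.Basis.coe_mk]
  have hcard : Fintype.card ι = N := by
    have := Module.finrank_eq_card_basis B₀
    simpa [Module.finrank_pi] using this.symm
  have eqv : ι ≃ Fin N := Fintype.equivFinOfCardEq hcard
  refine ⟨B₀.reindex eqv, bl ∘ eqv.symm, fun i => hlt _, fun t => ?_⟩
  have h1 : flag t = F (t : ℕ) := by
    rw [hF]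
    congr 1
    exact (Fin.ext (by simp; omega)).symm
  rw [h1, hspan (t : ℕ) (by omega)]
  congr 1
  ext x
  constructor
  · rintro ⟨i, hi, rfl⟩
    exact ⟨eqv i, by simpa using hi, by simp [hB₀]⟩
  · rintro ⟨j, hj, rfl⟩
    exact ⟨eqv.symm j, by simpa using hj, by simp [hB₀]⟩

section Pre
variable {R k : Type} [CommRing R] [Field k] (ρ : R →+* k) {N : ℕ}

/-- Preimage of a `k`-subspace of `k^N` in `R^N` under entrywise reduction. -/
def preSub (S : Submodule k (Fin N → k)) : Submodule R (Fin N → R) where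
  carrier := {v | (fun i => ρ (v i)) ∈ S}
  add_mem' := by
    intro a b ha hb
    have := S.add_mem ha hb
    have h : (fun i => ρ ((a + b) i)) = (fun i => ρ (a i)) + (fun i => ρ (b i)) := by
      funext i; simp
    show (fun i => ρ ((a + b) i)) ∈ S
    rw [h]; exact this
  zero_mem' := by
    have h : (fun i => ρ ((0 : Fin N → R) i)) = 0 := by funext i; simp
    show (fun i => ρ ((0 : Fin N → R) i)) ∈ S
    rw [h]
    exact S.zero_mem
  smul_mem' := by
    intro c v hv
    have := S.smul_mem (ρ c) hv
    have h : (fun i => ρ ((c • v) i)) = ρ c • (fun i => ρ (v i)) := by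
      funext i; simp
    show (fun i => ρ ((c • v) i)) ∈ S
    rw [h]; exact this

lemma mem_preSub {S : Submodule k (Fin N → k)} {v : Fin N → R} :
    v ∈ preSub ρ S ↔ (fun i => ρ (v i)) ∈ S := Iff.rfl

lemma preSub_top : preSub ρ (⊤ : Submodule k (Fin N → k)) = ⊤ := by
  ext v; simp [mem_preSub]

lemma redv_mulVec (x : Matrix (Fin N) (Fin N) R) (v : Fin N → R) :
    (fun i => ρ ((x.mulVec v) i)) = (ρ.mapMatrix x).mulVec (fun i => ρ (v i)) := by
  funext i
  rw [RingHom.map_mulVec]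
  rfl
end Pre

/-- numerator function for chain valuations. -/
def cf {N : ℕ} (bl : Fin N → ℕ) (e : ℕ) (i j : Fin N) (t : ℕ) : ℕ :=
  (bl i + t + (e-1) - bl j) / e

section Main
variable {R k : Type} [CommRing R] [Field k] {N e : ℕ}

/-- The lattice chain of `R`-submodules of `R^N`. -/
def chainL (ρ : R →+* k) (ϖ : R) (flag : Fin (e+1) → Submodule k (Fin N → k))
    (j : ℕ) : Submodule R (Fin N → R) :=
  (Ideal.span {ϖ})^(j/e) • preSub ρ (flag ⟨e - j % e, by omega⟩)

variable (ρ : R →+* k) (ϖ : R) (flag : Fin (e+1) → Submodule k (Fin N → k))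

lemma chainL_zero (he : 1 ≤ e) (htop : flag (Fin.last e) = ⊤) :
    chainL ρ ϖ flag 0 = ⊤ := by
  have h0 : (⟨e - 0 % e, by omega⟩ : Fin (e+1)) = Fin.last e := by
    apply Fin.ext; simp [Fin.last]
  rw [chainL, h0, htop, preSub_top, Nat.zero_div, pow_zero, Ideal.one_eq_top,
    Submodule.top_smul]

lemma chainL_add_e (he : 1 ≤ e) (j : ℕ) :
    chainL ρ ϖ flag (j + e) = Ideal.span {ϖ} • chainL ρ ϖ flag j := by
  rw [chainL, chainL]
  have h1 : (⟨e - (j+e) % e, by omega⟩ : Fin (e+1)) = ⟨e - j % e, by omega⟩ :=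
    Fin.ext (by simp [Nat.add_mod_right])
  rw [h1, Nat.add_div_right _ (by omega), pow_succ', ← Ideal.smul_eq_mul,
    Submodule.smul_assoc]

lemma div_mod_succ (he : 1 ≤ e) (j : ℕ) :
    ((j+1) % e = j % e + 1 ∧ (j+1)/e = j/e ∧ j % e + 1 < e) ∨
      (j % e = e - 1 ∧ (j+1) % e = 0 ∧ (j+1)/e = j/e + 1) := by
  have h1 := Nat.div_add_mod j e
  have h2 : j % e < e := Nat.mod_lt _ (by omega)
  rcases Nat.lt_or_ge (j % e) (e - 1) with h | h
  · left
    have hrepr : j + 1 = (j % e + 1) + e * (j / e) := by omega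
    rw [hrepr, Nat.add_mul_mod_self_left, Nat.add_mul_div_left _ _ (by omega : 0 < e),
      Nat.mod_eq_of_lt (by omega), Nat.div_eq_of_lt (by omega)]
    omega
  · right
    have hexp : e * (j / e + 1) = e * (j / e) + e := by ring
    have hrepr : j + 1 = 0 + e * (j / e + 1) := by omega
    rw [hrepr, Nat.add_mul_mod_self_left, Nat.add_mul_div_left _ _ (by omega : 0 < e),
      Nat.zero_mod, Nat.zero_div]
    omega

lemma mem_span_pw_smul_top {z : Fin N → R}
    (hker : ∀ x, ρ x = 0 ↔ ∃ c, x = c * ϖ) (hz : ∀ i, ρ (z i) = 0) :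
    z ∈ Ideal.span {ϖ} • (⊤ : Submodule R (Fin N → R)) := by
  rw [Submodule.ideal_span_singleton_smul]
  choose c hc using fun i => (hker (z i)).mp (hz i)
  refine ⟨c, Submodule.mem_top, ?_⟩
  funext i
  simpa [mul_comm] using (hc i).symm

lemma chainL_step (he : 1 ≤ e) (hbot : flag 0 = ⊥) (htop : flag (Fin.last e) = ⊤)
    (hker : ∀ x, ρ x = 0 ↔ ∃ c, x = c * ϖ)
    (x : Matrix (Fin N) (Fin N) R)
    (hx : ∀ (t : Fin e) v, v ∈ flag t.succ → (ρ.mapMatrix x).mulVec v ∈ flag t.castSucc)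
    (j : ℕ) : ∀ v ∈ chainL ρ ϖ flag j, x.mulVec v ∈ chainL ρ ϖ flag (j + 1) := by
  intro v hv
  have hje : j % e < e := Nat.mod_lt _ (by omega)
  rw [chainL] at hv
  refine Submodule.smul_induction_on hv ?_ ?_
  · intro m hm w hw
    rw [Matrix.mulVec_smul]
    rcases div_mod_succ (e := e) (by omega) j with ⟨hm1, hd1, hlt1⟩ | ⟨hm2, hd2, he2⟩
    · -- flag index drops
      set t : Fin e := ⟨e - 1 - j % e, by omega⟩ with ht
      have hsucc : (⟨e - j % e, by omega⟩ : Fin (e+1)) = t.succ := Fin.ext (by simp [ht]; omega)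
      have hcast : (⟨e - (j+1) % e, by omega⟩ : Fin (e+1)) = t.castSucc :=
        Fin.ext (by simp [ht]; omega)
      have hw' : x.mulVec w ∈ preSub ρ (flag t.castSucc) := by
        rw [mem_preSub, redv_mulVec]
        exact hx t _ (by rw [hsucc] at hw; exact hw)
      rw [chainL, hd1, hcast]
      exact Submodule.smul_mem_smul hm hw'
    · -- bottom of the flag: pick up a power of ϖ
      set t0 : Fin e := ⟨0, by omega⟩ with ht0
      have hsucc : (⟨e - j % e, by omega⟩ : Fin (e+1)) = t0.succ := Fin.ext (by simp [ht0]; omega)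
      have hw' : x.mulVec w ∈ preSub ρ (flag t0.castSucc) := by
        rw [mem_preSub, redv_mulVec]
        exact hx t0 _ (by rw [hsucc] at hw; exact hw)
      have hbot' : (t0.castSucc : Fin (e+1)) = 0 := by
        apply Fin.ext; simp [ht0]
      rw [hbot', hbot] at hw'
      have hz : x.mulVec w ∈ Ideal.span {ϖ} • (⊤ : Submodule R (Fin N → R)) := by
        refine mem_span_pw_smul_top ρ ϖ hker ?_
        intro i
        have h5 := hw'
        rw [mem_preSub] at h5
        exact congrFun (by simpa using h5) i
      have hidx : (⟨e - (j+1) % e, by omega⟩ : Fin (e+1)) = Fin.last e :=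
        Fin.ext (by simp [hd2, Fin.last])
      rw [chainL, hidx, htop, preSub_top, he2, pow_succ, ← Ideal.smul_eq_mul,
        Submodule.smul_assoc]
      exact Submodule.smul_mem_smul hm hz
  · intro v1 v2 h1 h2
    rw [Matrix.mulVec_add]
    exact add_mem h1 h2

lemma chainL_e (he : 1 ≤ e) (htop : flag (Fin.last e) = ⊤) :
    chainL ρ ϖ flag e = Ideal.span {ϖ} • (⊤ : Submodule R (Fin N → R)) := by
  have hidx : (⟨e - e % e, by omega⟩ : Fin (e+1)) = Fin.last e :=
    Fin.ext (by simp [Nat.mod_self, Fin.last])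
  rw [chainL, hidx, htop, preSub_top, Nat.div_self (by omega : 0 < e), pow_one]

section DirI
variable (he : 1 ≤ e) (hbot : flag 0 = ⊥) (htop : flag (Fin.last e) = ⊤)
  (hker : ∀ x, ρ x = 0 ↔ ∃ c, x = c * ϖ)
  (P : Submodule R (Matrix (Fin N) (Fin N) R))
  (hP : ∀ x, x ∈ P ↔ ∀ (t : Fin e) v, v ∈ flag t.succ →
    (ρ.mapMatrix x).mulVec v ∈ flag t.castSucc)

include he hbot htop hker hP

lemma chainL_pow_step : ∀ (t : ℕ), 1 ≤ t → ∀ x ∈ P ^ t, ∀ j, ∀ v ∈ chainL ρ ϖ flag j,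
    x.mulVec v ∈ chainL ρ ϖ flag (j + t) := by
  intro t
  induction t with
  | zero => omega
  | succ t ih =>
    intro _ x hx j v hv
    rcases Nat.lt_or_ge t 1 with ht | ht
    · interval_cases t
      rw [pow_one] at hx
      exact chainL_step ρ ϖ flag he hbot htop hker x ((hP x).mp hx) j v hv
    · rw [pow_succ] at hx
      refine Submodule.mul_induction_on hx ?_ ?_
      · intro y hy z hz
        rw [← Matrix.mulVec_mulVec]
        have h1 := chainL_step ρ ϖ flag he hbot htop hker z ((hP z).mp hz) j v hv
        have h2 := ih ht y hy (j+1) _ h1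
        have heq : j + 1 + t = j + (t+1) := by omega
        rwa [heq] at h2
      · intro y z hy hz
        rw [Matrix.add_mulVec]
        exact add_mem hy hz

lemma dirI (hρ : Function.Surjective ⇑ρ) (hann : ∀ x, x * ϖ = 0 → ρ x = 0)
    (A : Submodule R (Matrix (Fin N) (Fin N) R))
    (hA : ∀ x, x ∈ A ↔ ∀ (t : Fin (e+1)) v, v ∈ flag t → (ρ.mapMatrix x).mulVec v ∈ flag t) :
    P ^ e ≤ Ideal.span {ϖ} • A := by
  intro x hx
  have hρϖ : ρ ϖ = 0 := (hker ϖ).mpr ⟨1, (one_mul ϖ).symm⟩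
  have hact := chainL_pow_step ρ ϖ flag he hbot htop hker P hP e he x hx
  have hmemI : ∀ z : Fin N → R, z ∈ Ideal.span {ϖ} • (⊤ : Submodule R (Fin N → R)) →
      ∀ i, ρ (z i) = 0 := by
    intro z hz i
    rw [Submodule.ideal_span_singleton_smul] at hz
    obtain ⟨w, -, rfl⟩ := hz
    simp [hρϖ]
  have hent : ∀ i j₀, ρ (x i j₀) = 0 := by
    intro i j₀
    have h0 : Pi.single j₀ (1:R) ∈ chainL ρ ϖ flag 0 := by
      rw [chainL_zero ρ ϖ flag he htop]; trivial
    have h1 := hact 0 _ h0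
    rw [zero_add, chainL_e ρ ϖ flag he htop] at h1
    have h6 := hmemI _ h1 i
    rw [Matrix.mulVec_single] at h6
    simpa using h6
  choose c hc using fun i j => (hker (x i j)).mp (hent i j)
  set y : Matrix (Fin N) (Fin N) R := Matrix.of c with hy
  have hxy : x = ϖ • y := by
    ext i j
    rw [hy]
    simp only [Matrix.smul_apply, Matrix.of_apply, smul_eq_mul]
    rw [hc i j, mul_comm]
  have hyA : y ∈ A := by
    rw [hA]
    intro t v hv
    rcases Nat.eq_zero_or_pos (t : ℕ) with ht0 | ht0
    · have ht : t = 0 := by apply Fin.ext; rw [Fin.val_zero]; omega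
      subst ht
      rw [hbot] at hv ⊢
      rw [Submodule.mem_bot] at hv
      subst hv
      simp [Matrix.mulVec_zero]
    · have h7 : (t : ℕ) < e + 1 := t.isLt
      choose a ha using fun i => hρ (v i)
      have hahat : (fun i => ρ (a i)) = v := funext ha
      have hvhat : a ∈ preSub ρ (flag t) := by rw [mem_preSub, hahat]; exact hv
      have hchain : a ∈ chainL ρ ϖ flag (e - (t : ℕ)) := by
        have hidx : (⟨e - (e - (t:ℕ)) % e, by omega⟩ : Fin (e+1)) = t := by
          apply Fin.ext
          simp only [Nat.mod_eq_of_lt (by omega : e - (t:ℕ) < e)]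
          omega
        rw [chainL, hidx, Nat.div_eq_of_lt (by omega), pow_zero, Ideal.one_eq_top,
          Submodule.top_smul]
        exact hvhat
      have h2 := hact (e - (t:ℕ)) _ hchain
      rw [chainL_add_e ρ ϖ flag he] at h2
      have hLt : chainL ρ ϖ flag (e - (t:ℕ)) = preSub ρ (flag t) := by
        have hidx : (⟨e - (e - (t:ℕ)) % e, by omega⟩ : Fin (e+1)) = t := by
          apply Fin.ext
          simp only [Nat.mod_eq_of_lt (by omega : e - (t:ℕ) < e)]
          omega
        rw [chainL, hidx, Nat.div_eq_of_lt (by omega), pow_zero, Ideal.one_eq_top,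
          Submodule.top_smul]
      rw [hLt, Submodule.ideal_span_singleton_smul] at h2
      obtain ⟨w, hw, hweq⟩ := h2
      have hcan : ∀ i, ρ ((y.mulVec a) i) = ρ (w i) := by
        intro i
        have h3 : ϖ • (y.mulVec a) = ϖ • w := by
          rw [← Matrix.smul_mulVec, ← hxy]
          exact hweq.symm
        have h8 := congrFun h3 i
        simp only [Pi.smul_apply, smul_eq_mul] at h8
        have h4 : ϖ * ((y.mulVec a) i - w i) = 0 := by
          rw [mul_sub, h8, sub_self]
        have h5 := hann _ (by rw [mul_comm] at h4; exact h4)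
        have h6 : ρ ((y.mulVec a) i) - ρ (w i) = 0 := by rw [← map_sub]; exact h5
        exact sub_eq_zero.mp h6
      have hfin : (fun i => ρ ((y.mulVec a) i)) ∈ flag t := by
        have : (fun i => ρ ((y.mulVec a) i)) = (fun i => ρ (w i)) := funext hcan
        rw [this]
        exact hw
      rw [redv_mulVec, hahat] at hfin
      exact hfin
  rw [hxy, Submodule.ideal_span_singleton_smul]
  exact Submodule.smul_mem_pointwise_smul y ϖ A hyA

end DirI

lemma genP (he : 1 ≤ e) (bl : Fin N → ℕ) (hble : ∀ i, bl i < e)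
    (hsurj : ∀ u, u < e → ∃ i, bl i = u)
    (P : Submodule R (Matrix (Fin N) (Fin N) R))
    (EE : Fin N → Fin N → Matrix (Fin N) (Fin N) R)
    (hE : ∀ i j, bl i < bl j → EE i j ∈ P)
    (hE0 : ∀ (i j : Fin N) (m : R), m ∈ Ideal.span {ϖ} → m • EE i j ∈ P)
    (hEmul : ∀ i j l, EE i j * EE j l = EE i l) :
    ∀ t, 1 ≤ t → ∀ i j z, z ∈ (Ideal.span {ϖ} : Ideal R)^(cf bl e i j t) → z • EE i j ∈ P ^ t := by
  intro t ht
  induction t, ht using Nat.le_induction with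
  | base =>
    intro i j z hz
    rw [pow_one]
    rcases Nat.lt_or_ge (bl i) (bl j) with h | h
    · exact Submodule.smul_mem P z (hE i j h)
    · have hc : cf bl e i j 1 = 1 := by
        have h1 := hble i; have h2 := hble j
        rw [cf]
        apply Nat.div_eq_of_lt_le (by omega)
        omega
      rw [hc, pow_one] at hz
      exact hE0 i j z hz
  | succ t ht ih =>
    intro i j z hz
    rcases Nat.lt_or_ge (bl i + 1) e with hlt | hge
    · obtain ⟨kk, hkk⟩ := hsurj (bl i + 1) hlt
      have hc : cf bl e kk j t = cf bl e i j (t+1) := by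
        rw [cf, cf]
        congr 1
        omega
      have h1 : z • EE i j = EE i kk * (z • EE kk j) := by
        rw [mul_smul_comm, hEmul]
      rw [h1, pow_succ']
      exact Submodule.mul_mem_mul (hE i kk (by omega)) (ih kk j z (by rw [hc]; exact hz))
    · have hbie : bl i = e - 1 := by have := hble i; omega
      obtain ⟨k0, hk0⟩ := hsurj 0 (by omega)
      have hc : cf bl e i j (t+1) = cf bl e k0 j t + 1 := by
        have h2 := hble j
        rw [cf, cf]
        have h9 : bl i + (t+1) + (e-1) - bl j = (bl k0 + t + (e-1) - bl j) + e := by omega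
        rw [h9, Nat.add_div_right _ (by omega : 0 < e)]
      rw [hc, pow_succ'] at hz
      refine Submodule.mul_induction_on hz ?_ ?_
      · intro m hm w hw
        have h1 : (m * w) • EE i j = (m • EE i k0) * (w • EE k0 j) := by
          rw [smul_mul_assoc, mul_smul_comm, hEmul, smul_smul]
        rw [h1, pow_succ']
        exact Submodule.mul_mem_mul (hE0 i k0 m hm) (ih k0 j w hw)
      · intro z1 z2 h1 h2
        rw [add_smul]
        exact add_mem h1 h2

lemma cf_e_val (he : 1 ≤ e) (bl : Fin N → ℕ) (hble : ∀ i, bl i < e) (i j : Fin N) :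
    cf bl e i j e = if bl j < bl i then 2 else 1 := by
  have h1 := hble i; have h2 := hble j
  rw [cf]
  rcases Nat.lt_or_ge (bl j) (bl i) with h | h
  · rw [if_pos h]
    apply Nat.div_eq_of_lt_le (by omega)
    omega
  · rw [if_neg (by omega)]
    apply Nat.div_eq_of_lt_le (by omega)
    omega
lemma dirII (he : 1 ≤ e) (hρ : Function.Surjective ⇑ρ)
    (hker : ∀ x, ρ x = 0 ↔ ∃ c, x = c * ϖ)
    (hunit : ∀ x : R, ρ x ≠ 0 → IsUnit x)
    (hmono : StrictMono flag) (hbot : flag 0 = ⊥) (htop : flag (Fin.last e) = ⊤)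
    (A P : Submodule R (Matrix (Fin N) (Fin N) R))
    (hA : ∀ x, x ∈ A ↔ ∀ (t : Fin (e+1)) v, v ∈ flag t → (ρ.mapMatrix x).mulVec v ∈ flag t)
    (hP : ∀ x, x ∈ P ↔ ∀ (t : Fin e) v, v ∈ flag t.succ →
      (ρ.mapMatrix x).mulVec v ∈ flag t.castSucc) :
    Ideal.span {ϖ} • A ≤ P ^ e := by
  classical
  obtain ⟨B, bl, hble, hflag⟩ := exists_adapted_basis he flag hmono hbot htop
  -- surjectivity of the block function
  have hsurj : ∀ u, u < e → ∃ i, bl i = u := by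
    intro u hu
    by_contra hcon
    push_neg at hcon
    have hset : {i : Fin N | bl i < u} = {i | bl i < u + 1} := by
      ext i
      simp only [Set.mem_setOf_eq]
      have := hcon i
      omega
    have heq : flag ⟨u, by omega⟩ = flag ⟨u+1, by omega⟩ := by
      rw [hflag ⟨u, by omega⟩, hflag ⟨u+1, by omega⟩]
      simp only [hset]
    have hlt : (⟨u, by omega⟩ : Fin (e+1)) < ⟨u+1, by omega⟩ := by
      simp only [Fin.mk_lt_mk]; omega
    exact absurd heq (ne_of_lt (hmono hlt))
  -- the change of basis matrix over k and its lift
  set g : Matrix (Fin N) (Fin N) k := Matrix.of (fun i j => B j i) with hgdef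
  choose gl hgl using fun i j => hρ (g i j)
  set gR : Matrix (Fin N) (Fin N) R := Matrix.of gl with hgRdef
  have hredgR : ρ.mapMatrix gR = g := by
    ext i j
    simp only [RingHom.mapMatrix_apply, Matrix.map_apply, hgRdef, Matrix.of_apply]
    exact hgl i j
  have hgtm : g = (Pi.basisFun k (Fin N)).toMatrix ⇑B := by
    ext i j
    rw [Module.Basis.toMatrix_apply, Pi.basisFun_repr, hgdef]
    rfl
  have hdetg : IsUnit g := by
    rw [hgtm]
    have : Invertible ((Pi.basisFun k (Fin N)).toMatrix ⇑B) :=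
      Module.Basis.invertibleToMatrix (Pi.basisFun k (Fin N)) B
    exact isUnit_of_invertible _
  have hdet : IsUnit gR.det := by
    apply hunit
    rw [RingHom.map_det, hredgR]
    exact ((Matrix.isUnit_iff_isUnit_det g).mp hdetg).ne_zero
  set hR : Matrix (Fin N) (Fin N) R := gR⁻¹ with hhRdef
  have hgh : gR * hR = 1 := Matrix.mul_nonsing_inv _ hdet
  have hhg : hR * gR = 1 := Matrix.nonsing_inv_mul _ hdet
  have hredhRg : ρ.mapMatrix hR * g = 1 := by
    have := congrArg (ρ.mapMatrix) hhg
    rwa [map_mul, map_one, hredgR] at this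
  have hgredhR : g * ρ.mapMatrix hR = 1 := by
    have := congrArg (ρ.mapMatrix) hgh
    rwa [map_mul, map_one, hredgR] at this
  -- basic facts about B, bl, repr
  have hrepr0 : ∀ (v : Fin N → k) (t : Fin (e+1)), v ∈ flag t → ∀ i, ¬ (bl i < (t:ℕ)) →
      B.repr v i = 0 := by
    intro v t hv i hi
    rw [hflag t] at hv
    have hsupp := (B.mem_span_image).mp hv
    by_contra h0
    exact hi (hsupp (Finsupp.mem_support_iff.mpr h0))
  have hBmem : ∀ (i : Fin N) (t : Fin (e+1)), bl i < (t:ℕ) → B i ∈ flag t := by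
    intro i t hi
    rw [hflag t]
    exact Submodule.subset_span ⟨i, hi, rfl⟩
  -- vector computations
  have hgmul : ∀ w : Fin N → k, g.mulVec w = ∑ j, w j • B j := by
    intro w
    funext a
    rw [Finset.sum_apply]
    simp only [Matrix.mulVec, dotProduct, hgdef, Matrix.of_apply, Pi.smul_apply,
      smul_eq_mul]
    exact Finset.sum_congr rfl (fun j _ => mul_comm _ _)
  have hco : ∀ v : Fin N → k, (ρ.mapMatrix hR).mulVec v = fun i => B.repr v i := by
    intro v
    have h1 : g.mulVec (fun i => B.repr v i) = v := by
      rw [hgmul]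
      exact B.sum_repr v
    conv_lhs => rw [← h1]
    rw [Matrix.mulVec_mulVec, hredhRg, Matrix.one_mulVec]
  set EE : Fin N → Fin N → Matrix (Fin N) (Fin N) R :=
    fun i j => gR * Matrix.single i j 1 * hR with hEEdef
  have hEmul : ∀ i j l, EE i j * EE j l = EE i l := by
    intro i j l
    show gR * Matrix.single i j 1 * hR * (gR * Matrix.single j l 1 * hR) =
      gR * Matrix.single i l 1 * hR
    calc gR * Matrix.single i j 1 * hR * (gR * Matrix.single j l 1 * hR)
        = gR * (Matrix.single i j 1 *
            ((hR * gR) * (Matrix.single j l 1 * hR))) := by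
          simp only [Matrix.mul_assoc]
      _ = gR * (Matrix.single i j 1 * (Matrix.single j l 1 * hR)) := by
          rw [hhg, Matrix.one_mul]
      _ = gR * ((Matrix.single i j 1 * Matrix.single j l 1) * hR) := by
          rw [Matrix.mul_assoc]
      _ = gR * Matrix.single i l 1 * hR := by
          rw [Matrix.single_mul_single_same, one_mul, Matrix.mul_assoc]
  have hstdmap : ∀ i j : Fin N, ρ.mapMatrix (Matrix.single i j (1:R)) =
      Matrix.single i j (1:k) := by
    intro i j
    ext a b
    simp only [RingHom.mapMatrix_apply, Matrix.map_apply, Matrix.single, Matrix.of_apply]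
    split <;> simp
  have hstdvec : ∀ (i j : Fin N) (u : Fin N → k),
      (Matrix.single i j (1:k)).mulVec u = Pi.single i (u j) := by
    intro i j u
    funext a
    simp only [Matrix.mulVec, dotProduct, Matrix.single, Matrix.of_apply,
      ite_and, boole_mul, Finset.sum_ite_eq, Finset.mem_univ, if_true, Pi.single_apply]
    rcases eq_or_ne i a with rfl | hia
    · simp
    · simp [Ne.symm hia, hia]
  have hact : ∀ (i j : Fin N) (v : Fin N → k),
      (ρ.mapMatrix (EE i j)).mulVec v = (B.repr v j) • B i := by
    intro i j v
    rw [hEEdef]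
    simp only []
    rw [map_mul, map_mul, hredgR, hstdmap, ← Matrix.mulVec_mulVec, ← Matrix.mulVec_mulVec,
      hco, hstdvec, Matrix.mulVec_single]
    funext a
    simp only [hgdef, Matrix.of_apply, Pi.smul_apply, smul_eq_mul]
    exact mul_comm _ _
  -- membership of the conjugated matrix units in P
  have hE : ∀ i j, bl i < bl j → EE i j ∈ P := by
    intro i j hij
    rw [hP]
    intro t v hv
    rw [hact]
    rcases Nat.lt_or_ge (bl j) ((t : ℕ) + 1) with hc | hc
    · refine Submodule.smul_mem _ _ (hBmem i t.castSucc ?_)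
      simp only [Fin.coe_castSucc]
      omega
    · have h0 : B.repr v j = 0 := by
        refine hrepr0 v t.succ hv j ?_
        simp only [Fin.val_succ]
        omega
      rw [h0, zero_smul]
      exact Submodule.zero_mem _
  have hmemM : ∀ m : R, m ∈ Ideal.span {ϖ} → ρ m = 0 := by
    intro m hm
    obtain ⟨c, hc⟩ := Ideal.mem_span_singleton'.mp hm
    exact (hker m).mpr ⟨c, hc.symm⟩
  have hE0 : ∀ (i j : Fin N) (m : R), m ∈ Ideal.span {ϖ} → m • EE i j ∈ P := by
    intro i j m hm
    rw [hP]
    intro t v hv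
    have h1 : ρ.mapMatrix (m • EE i j) = ρ m • ρ.mapMatrix (EE i j) := by
      ext a b
      simp only [RingHom.mapMatrix_apply, Matrix.map_apply, Matrix.smul_apply, smul_eq_mul,
        map_mul]
    rw [h1, hmemM m hm, zero_smul, Matrix.zero_mulVec]
    exact Submodule.zero_mem _
  -- conclusion
  intro x hx
  refine Submodule.smul_induction_on hx ?_ (fun y z hy hz => add_mem hy hz)
  intro m hm a ha
  set c : Matrix (Fin N) (Fin N) R := hR * a * gR with hcdef
  have hback : a = gR * c * hR := by
    rw [hcdef, ← Matrix.mul_assoc, ← Matrix.mul_assoc, hgh, Matrix.one_mul, Matrix.mul_assoc,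
      hgh, Matrix.mul_one]
  have hcm : ∀ i j, bl j < bl i → c i j ∈ Ideal.span {ϖ} := by
    intro i j hij
    have hentry : ρ (c i j) = (ρ.mapMatrix c) i j := rfl
    have hred : ρ.mapMatrix c = ρ.mapMatrix hR * ρ.mapMatrix a * g := by
      rw [hcdef, map_mul, map_mul, hredgR]
    have hBj : g.mulVec (Pi.single j 1) = B j := by
      rw [Matrix.mulVec_single]
      funext i'
      simp [hgdef]
    have hw : (ρ.mapMatrix a).mulVec (B j) ∈ flag ⟨bl j + 1, by have := hble j; omega⟩ := by
      rw [hA] at ha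
      exact ha _ _ (hBmem j _ (by simp))
    have hrow : (ρ.mapMatrix c).mulVec (Pi.single j 1) =
        fun i' => B.repr ((ρ.mapMatrix a).mulVec (B j)) i' := by
      rw [hred, ← Matrix.mulVec_mulVec, ← Matrix.mulVec_mulVec, hBj, hco]
    have hzero : ρ (c i j) = 0 := by
      have h2 := congrFun hrow i
      simp only [Matrix.mulVec_single, MulOpposite.op_one, one_smul, Matrix.col_apply,
        mul_one] at h2
      rw [hentry]
      rw [h2]
      refine hrepr0 _ _ hw i ?_
      simp only []
      omega
    obtain ⟨d, hd⟩ := (hker _).mp hzero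
    exact Ideal.mem_span_singleton'.mpr ⟨d, hd.symm⟩
  have hsum : m • a = ∑ i, ∑ j, (m * c i j) • EE i j := by
    conv_lhs => rw [hback, Matrix.matrix_eq_sum_single c]
    rw [Finset.mul_sum, Finset.sum_mul, Finset.smul_sum]
    refine Finset.sum_congr rfl (fun i _ => ?_)
    rw [Finset.mul_sum, Finset.sum_mul, Finset.smul_sum]
    refine Finset.sum_congr rfl (fun j _ => ?_)
    have h3 : Matrix.single i j (c i j) = c i j • Matrix.single i j 1 := by
      rw [Matrix.smul_single, smul_eq_mul, mul_one]
    rw [h3, Matrix.mul_smul, Matrix.smul_mul, smul_smul, hEEdef]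
  rw [hsum]
  refine Submodule.sum_mem _ (fun i _ => Submodule.sum_mem _ (fun j _ => ?_))
  refine genP ϖ he bl hble hsurj P EE hE hE0 hEmul e he i j _ ?_
  rw [cf_e_val he bl hble]
  rcases Nat.lt_or_ge (bl j) (bl i) with hij | hij
  · rw [if_pos hij, pow_two]
    exact Submodule.mul_mem_mul hm (hcm i j hij)
  · rw [if_neg (by omega), pow_one]
    exact Ideal.mul_mem_right _ _ hm

end Main

lemma submodule_mul_ideal_smul_one {R M : Type} [CommRing R] [Ring M] [Algebra R M]
    (A : Submodule R M) (I : Ideal R) :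
    A * (I • (1 : Submodule R M)) = I • A := by
  have hone : (1 : M) ∈ (1 : Submodule R M) := by
    rw [Submodule.one_eq_span]
    exact Submodule.mem_span_singleton_self 1
  apply le_antisymm
  · rw [Submodule.mul_le]
    intro a ha z hz
    refine Submodule.smul_induction_on hz ?_ ?_
    · intro m hm y hy
      rw [Submodule.one_eq_span] at hy
      obtain ⟨c, hc⟩ := Submodule.mem_span_singleton.mp hy
      have : a * (m • y) = m • (c • a) := by
        rw [← hc, smul_comm m c, mul_smul_comm, mul_smul_comm, mul_one, smul_comm]
      rw [this]
      exact Submodule.smul_mem_smul hm (Submodule.smul_mem _ _ ha)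
    · intro y z hy hz
      rw [mul_add]
      exact add_mem hy hz
  · intro z hz
    refine Submodule.smul_induction_on hz ?_ ?_
    · intro m hm a ha
      have : m • a = a * (m • (1:M)) := by
        rw [mul_smul_comm, mul_one]
      rw [this]
      exact Submodule.mul_mem_mul ha (Submodule.smul_mem_smul hm hone)
    · intro y z hy hz
      exact add_mem hy hz

/-- Let `A ⊆ M_N(𝔬_r)` be the preimage of the parabolic subalgebra of `M_N(F_q)`
stabilising a (strict, complete) flag of length `e`, and `P` the preimage of its
nilpotent radical.  Then `𝔭·A = A·𝔭 = P^e`. -/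
theorem parahoric_radical_power
    (o : Type) [CommRing o] [IsDomain o] [IsDiscreteValuationRing o]
    [Finite (ResidueField o)] (N r : ℕ) (hN : 2 ≤ N) (hr : 2 ≤ r)
    (e : ℕ) (he : 1 ≤ e)
    (flag : Fin (e + 1) → Submodule (ResidueField o) (Fin N → ResidueField o))
    (hmono : StrictMono flag) (hbot : flag 0 = ⊥) (htop : flag (Fin.last e) = ⊤)
    (A P : Submodule (o ⧸ (maximalIdeal o) ^ r)
      (Matrix (Fin N) (Fin N) (o ⧸ (maximalIdeal o) ^ r)))
    (hA : ∀ x, x ∈ A ↔ ∀ (t : Fin (e + 1)) (v : Fin N → ResidueField o), v ∈ flag t →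
      ((resRed o r (by omega)).mapMatrix x).mulVec v ∈ flag t)
    (hP : ∀ x, x ∈ P ↔ ∀ (t : Fin e) (v : Fin N → ResidueField o), v ∈ flag t.succ →
      ((resRed o r (by omega)).mapMatrix x).mulVec v ∈ flag t.castSucc) :
    ((maximalIdeal o).map (Ideal.Quotient.mk ((maximalIdeal o) ^ r))) • A = P ^ e ∧
    A * (((maximalIdeal o).map (Ideal.Quotient.mk ((maximalIdeal o) ^ r))) •
      (1 : Submodule (o ⧸ (maximalIdeal o) ^ r)
        (Matrix (Fin N) (Fin N) (o ⧸ (maximalIdeal o) ^ r)))) = P ^ e := by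
  obtain ⟨π, hirr⟩ := IsDiscreteValuationRing.exists_irreducible o
  have hmax : maximalIdeal o = Ideal.span {π} :=
    (IsDiscreteValuationRing.irreducible_iff_uniformizer π).mp hirr
  set ρ := resRed o r (by omega : r ≠ 0) with hρdef
  set ϖ : o ⧸ (maximalIdeal o) ^ r := Ideal.Quotient.mk _ π with hϖdef
  have hliftmk : ∀ a : o, ρ (Ideal.Quotient.mk _ a) = residue o a := fun a => rfl
  have hspan : (maximalIdeal o).map (Ideal.Quotient.mk ((maximalIdeal o) ^ r)) =
      Ideal.span {ϖ} := by
    have h := Ideal.map_span (Ideal.Quotient.mk ((maximalIdeal o) ^ r)) {π}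
    rw [Set.image_singleton] at h
    rw [← hmax] at h
    exact h
  have hρ : Function.Surjective ⇑ρ := by
    intro y
    obtain ⟨a, ha⟩ := Ideal.Quotient.mk_surjective y
    exact ⟨Ideal.Quotient.mk _ a, by rw [hliftmk]; exact ha⟩
  have hπmem : π ∈ maximalIdeal o := by
    rw [hmax]; exact Submodule.mem_span_singleton_self π
  have hker : ∀ x, ρ x = 0 ↔ ∃ c, x = c * ϖ := by
    intro x
    obtain ⟨a, rfl⟩ := Ideal.Quotient.mk_surjective x
    constructor
    · intro h0
      rw [hliftmk] at h0
      have hamem : a ∈ maximalIdeal o := Ideal.Quotient.eq_zero_iff_mem.mp h0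
      rw [hmax, Ideal.mem_span_singleton'] at hamem
      obtain ⟨c, hc⟩ := hamem
      exact ⟨Ideal.Quotient.mk _ c, by rw [hϖdef, ← map_mul, hc]⟩
    · rintro ⟨c, hc⟩
      rw [hc, map_mul]
      have : ρ ϖ = 0 := by
        rw [hϖdef, hliftmk]
        exact Ideal.Quotient.eq_zero_iff_mem.mpr hπmem
      rw [this, mul_zero]
  have hann : ∀ x, x * ϖ = 0 → ρ x = 0 := by
    intro x hx
    obtain ⟨a, rfl⟩ := Ideal.Quotient.mk_surjective x
    rw [hϖdef, ← map_mul] at hx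
    have hmem : a * π ∈ (maximalIdeal o) ^ r := Ideal.Quotient.eq_zero_iff_mem.mp hx
    rw [hmax, Ideal.span_singleton_pow, Ideal.mem_span_singleton'] at hmem
    obtain ⟨c, hc⟩ := hmem
    have hr1 : π ^ r = π ^ (r-1) * π := by
      rw [← pow_succ]
      congr 1
      omega
    rw [hr1, ← mul_assoc] at hc
    have ha : a = c * π ^ (r-1) := (mul_right_cancel₀ hirr.ne_zero hc).symm
    have hamem : a ∈ maximalIdeal o := by
      rw [hmax, Ideal.mem_span_singleton]
      rw [ha]
      exact Dvd.dvd.mul_left (dvd_pow_self π (by omega : r - 1 ≠ 0)) c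
    rw [hliftmk]
    exact Ideal.Quotient.eq_zero_iff_mem.mpr hamem
  have hunit : ∀ x, ρ x ≠ 0 → IsUnit x := by
    intro x hx
    obtain ⟨a, rfl⟩ := Ideal.Quotient.mk_surjective x
    rw [hliftmk] at hx
    have : a ∉ maximalIdeal o := fun hmem => hx (Ideal.Quotient.eq_zero_iff_mem.mpr hmem)
    have hu : IsUnit a := by
      by_contra hnu
      exact this ((IsLocalRing.mem_maximalIdeal a).mpr hnu)
    exact hu.map _
  have hmain : Ideal.span {ϖ} • A = P ^ e := by
    apply le_antisymm
    · exact dirII ρ ϖ flag he hρ hker hunit hmono hbot htop A P hA hP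
    · exact dirI ρ ϖ flag he hbot htop hker P hP hρ hann A hA
  constructor
  · rw [hspan]; exact hmain
  · rw [hspan, submodule_mul_ideal_smul_one]; exact hmain
end
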